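/- arXiv:2505.13377 — 2 statements merged into one kernel-verified Lean document; each statement's English description precedes it below -/
import Mathlib

section
/- With Ψ(g) = Δg − E_t[g/(a_t(a_t + g))], a_t = σ_t², c_t = σ_t² + σ², and Δ = E_t[1/(c_t + ‖Ae‖²)²], the derivative Ψ'(g) = Δ − E_t[1/(a_t + g)²] satisfies Ψ'(g*) = 0 at g* = σ² + ‖Ae‖², Ψ'(0) < 0, and Ψ'(g) > 0 for g > σ² + ‖Ae‖². Hence g* is the unique minimizer of Ψ on [0, ∞). -/
open Matrix MeasureTheory

open Set intervalIntegral
lemma aux_int (f : ℝ → ℝ) (hf : Measurable f) (c : ℝ) (hc : 0 < c)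
    (hlb : ∀ t ∈ Set.Ioc (0:ℝ) 1, c ≤ f t) (n : ℕ) :
    IntervalIntegrable (fun t => 1 / f t ^ n) volume 0 1 := by
  rw [intervalIntegrable_iff_integrableOn_Ioc_of_le zero_le_one]
  constructor
  · exact (((hf.pow_const n).inv).aestronglyMeasurable).congr
      (Filter.Eventually.of_forall fun t => by simp [one_div])
  · apply MeasureTheory.HasFiniteIntegral.of_bounded (C := 1 / c ^ n)
    rw [ae_restrict_iff' measurableSet_Ioc]
    filter_upwards with t ht
    have h1 : c ≤ f t := hlb t ht
    have h2 : (0:ℝ) < f t ^ n := pow_pos (hc.trans_le h1) n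
    rw [Real.norm_eq_abs, abs_of_nonneg (by positivity)]
    exact one_div_le_one_div_of_le (pow_pos hc n) (pow_le_pow_left₀ hc.le h1 n)

/-- With `Ψ(g) = Δg − E_t[g/(a_t(a_t + g))]`, `a_t = σ_t²`, `c_t = σ_t² + σ²`, and
`Δ = E_t[1/(c_t + ‖Ae‖²)²]`, the derivative `Ψ'(g) = Δ − E_t[1/(a_t + g)²]` satisfies
`Ψ'(g*) = 0` at `g* = σ² + ‖Ae‖²`, `Ψ'(0) < 0`, and `Ψ'(g) > 0` for `g > g*`; hence `g*`
is the unique minimizer of `Ψ` on `[0, ∞)`. -/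
theorem stmt_4 {m d : ℕ} (A : Matrix (Fin m) (Fin d) ℝ) (e : Fin d → ℝ)
    (hAe : A.mulVec e ≠ 0)
    (σ σmin σmax : ℝ) (hσ : 0 < σ) (hσmin : 0 < σmin)
    (σt : ℝ → ℝ) (hmeas : Measurable σt)
    (hbound : ∀ t ∈ Set.Icc (0 : ℝ) 1, σmin ≤ σt t ∧ σt t ≤ σmax)
    (Δ : ℝ)
    (hΔ : Δ = ∫ t in (0 : ℝ)..1,
        1 / (σt t ^ 2 + σ ^ 2 + (A.mulVec e) ⬝ᵥ (A.mulVec e)) ^ 2)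
    (Ψ P : ℝ → ℝ)
    (hΨ : Ψ = fun g => Δ * g - ∫ t in (0 : ℝ)..1, g / (σt t ^ 2 * (σt t ^ 2 + g)))
    (hP : P = fun g => Δ - ∫ t in (0 : ℝ)..1, 1 / (σt t ^ 2 + g) ^ 2)
    (gstar : ℝ) (hgstar : gstar = σ ^ 2 + (A.mulVec e) ⬝ᵥ (A.mulVec e)) :
    (∀ g : ℝ, 0 ≤ g → HasDerivAt Ψ (P g) g) ∧
      P gstar = 0 ∧ P 0 < 0 ∧ (∀ g : ℝ, gstar < g → 0 < P g) ∧
      ∀ g ∈ Set.Ici (0 : ℝ), g ≠ gstar → Ψ gstar < Ψ g := by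
  set K : ℝ := (A.mulVec e) ⬝ᵥ (A.mulVec e) with hK
  have hKpos : 0 < K := by
    have h0 : (0:ℝ) ≤ K := Finset.sum_nonneg fun i _ => mul_self_nonneg _
    rcases h0.eq_or_lt with h | h
    · exact absurd (dotProduct_self_eq_zero.mp h.symm) hAe
    · exact h
  have hgstar_pos : 0 < gstar := by rw [hgstar]; positivity
  have hmin2 : (0:ℝ) < σmin ^ 2 := by positivity
  -- lower bound on σt t ^ 2 on Ioc
  have hlb : ∀ t ∈ Set.Ioc (0:ℝ) 1, σmin ^ 2 ≤ σt t ^ 2 := by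
    intro t ht
    have := (hbound t ⟨ht.1.le, ht.2⟩).1
    exact pow_le_pow_left₀ hσmin.le this 2
  -- integrability of 1/(σt t^2+g)^n for g > -σmin^2
  have hInt : ∀ (g : ℝ), -σmin^2 < g → ∀ n : ℕ,
      IntervalIntegrable (fun t => 1 / (σt t ^ 2 + g) ^ n) volume 0 1 := by
    intro g hg n
    apply aux_int _ ((hmeas.pow_const 2).add_const g) (σmin^2 + g) (by linarith)
    intro t ht
    have := hlb t ht
    linarith
  -- monotonicity of P
  have hPmono : ∀ g1 g2 : ℝ, -σmin^2 < g1 → g1 < g2 → P g1 < P g2 := by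
    intro g1 g2 hg1 hg12
    have h1 := hInt g1 hg1 2
    have h2 := hInt g2 (by linarith) 2
    have hpos : 0 < ∫ t in (0:ℝ)..1,
        (1 / (σt t ^ 2 + g1) ^ 2 - 1 / (σt t ^ 2 + g2) ^ 2) := by
      apply intervalIntegral_pos_of_pos_on (h1.sub h2) _ zero_lt_one
      intro t ht
      have hb := hlb t ⟨ht.1, ht.2.le⟩
      have hA1 : 0 < σt t ^ 2 + g1 := by linarith
      have hA2 : σt t ^ 2 + g1 < σt t ^ 2 + g2 := by linarith
      have : 1 / (σt t ^ 2 + g2) ^ 2 < 1 / (σt t ^ 2 + g1) ^ 2 := by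
        apply one_div_lt_one_div_of_lt (by positivity)
        exact pow_lt_pow_left₀ hA2 hA1.le (by norm_num)
      linarith
    rw [intervalIntegral.integral_sub h1 h2] at hpos
    simp only [hP]
    linarith
  -- P gstar = 0
  have hPgstar : P gstar = 0 := by
    simp only [hP, hΔ, sub_eq_zero, hgstar]
    apply intervalIntegral.integral_congr
    intro t ht
    ring_nf
  -- derivative of Ψ
  have hDeriv : ∀ g : ℝ, 0 ≤ g → HasDerivAt Ψ (P g) g := by
    intro g hg
    have hε : (0:ℝ) < σmin^2/2 := by linarith
    -- differentiate the integral of 1/(σt t^2 + x)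
    have key := intervalIntegral.hasDerivAt_integral_of_dominated_loc_of_deriv_le
      (F := fun x t => 1 / (σt t ^ 2 + x))
      (F' := fun x t => -(1 / (σt t ^ 2 + x) ^ 2))
      (x₀ := g) (a := (0:ℝ)) (b := 1) (μ := volume)
      (bound := fun _ => 1 / (σmin^2/2) ^ 2) (Metric.ball_mem_nhds g hε)
      ?_ ?_ ?_ ?_ ?_ ?_
    · obtain ⟨-, hd⟩ := key
      have hC : IntervalIntegrable (fun t => 1 / (σt t ^ 2) ^ 1) volume 0 1 := by
        apply aux_int _ (hmeas.pow_const 2) (σmin^2) hmin2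
        intro t ht; exact hlb t ht
      -- Ψ agrees with G near g
      have hEq : Ψ =ᶠ[nhds g] fun x => Δ * x -
          ((∫ t in (0:ℝ)..1, 1 / (σt t ^ 2) ^ 1) -
            ∫ t in (0:ℝ)..1, 1 / (σt t ^ 2 + x)) := by
        have hopen : IsOpen (Set.Ioi (-σmin^2)) := isOpen_Ioi
        filter_upwards [hopen.mem_nhds (show g ∈ Set.Ioi (-σmin^2) by
          simp only [Set.mem_Ioi]; linarith)] with x hx
        simp only [Set.mem_Ioi] at hx
        have hfx : IntervalIntegrable (fun t => 1 / (σt t ^ 2 + x) ^ 1) volume 0 1 :=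
          hInt x hx 1
        simp only [pow_one] at hfx
        simp only [hΨ]
        have : (∫ t in (0:ℝ)..1, x / (σt t ^ 2 * (σt t ^ 2 + x)))
            = (∫ t in (0:ℝ)..1, 1 / (σt t ^ 2) ^ 1) -
              ∫ t in (0:ℝ)..1, 1 / (σt t ^ 2 + x) := by
          rw [← intervalIntegral.integral_sub hC hfx]
          apply intervalIntegral.integral_congr
          intro t ht
          rw [Set.uIcc_of_le zero_le_one] at ht
          have h1 : σmin ≤ σt t := (hbound t ht).1
          have h2 : σmin ^ 2 ≤ σt t ^ 2 := pow_le_pow_left₀ hσmin.le h1 2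
          have h3 : (0:ℝ) < σt t ^ 2 := by linarith
          have h4 : (0:ℝ) < σt t ^ 2 + x := by linarith
          field_simp
          rw [add_div, div_self h3.ne']
          ring
        rw [this]
      refine HasDerivAt.congr_of_eventuallyEq ?_ hEq
      have h1 : HasDerivAt (fun x : ℝ => Δ * x) Δ g := by
        simpa using (hasDerivAt_id g).const_mul Δ
      have h2 : HasDerivAt (fun x : ℝ => Δ * x -
          ((∫ t in (0:ℝ)..1, 1 / (σt t ^ 2) ^ 1) -
            ∫ t in (0:ℝ)..1, 1 / (σt t ^ 2 + x)))
          (Δ - (0 - ∫ t in (0:ℝ)..1, -(1 / (σt t ^ 2 + g) ^ 2))) g :=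
        h1.sub ((hasDerivAt_const g _).sub hd)
      refine h2.congr_deriv ?_
      rw [intervalIntegral.integral_neg]
      simp only [hP]
      ring
    · filter_upwards with x
      apply Measurable.aestronglyMeasurable
      simp only [one_div]
      exact ((hmeas.pow_const 2).add_const x).inv
    · simpa using hInt g (by linarith) 1
    · apply Measurable.aestronglyMeasurable
      apply Measurable.neg
      simp only [one_div]
      exact (((hmeas.pow_const 2).add_const g).pow_const 2).inv
    · filter_upwards with t ht x hx
      rw [Real.ball_eq_Ioo] at hx
      rw [Set.uIoc_of_le zero_le_one] at ht
      have hb := hlb t ht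
      have hA : σmin^2/2 ≤ σt t ^ 2 + x := by
        have := hx.1; linarith
      rw [norm_neg, Real.norm_eq_abs, abs_of_nonneg (by positivity)]
      apply one_div_le_one_div_of_le (by positivity)
      exact pow_le_pow_left₀ (by linarith) hA 2
    · apply _root_.intervalIntegrable_const
    · filter_upwards with t ht x hx
      rw [Real.ball_eq_Ioo] at hx
      rw [Set.uIoc_of_le zero_le_one] at ht
      have hb := hlb t ht
      have hA : (0:ℝ) < σt t ^ 2 + x := by
        have := hx.1; linarith
      have : HasDerivAt (fun x : ℝ => (σt t ^ 2 + x)⁻¹)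
          (-1 / (σt t ^ 2 + x) ^ 2) x := by
        simpa using ((hasDerivAt_id x).const_add (σt t ^ 2)).fun_inv hA.ne'
      simpa [one_div, neg_div] using this
  refine ⟨hDeriv, hPgstar, ?_, ?_, ?_⟩
  · have := hPmono 0 gstar (by linarith) hgstar_pos
    rwa [hPgstar] at this
  · intro g hg
    have := hPmono gstar g (by linarith) hg
    rwa [hPgstar] at this
  · -- uniqueness of minimizer
    have hcont : ∀ x ∈ Set.Ici (0:ℝ), ContinuousWithinAt Ψ (Set.Ici (0:ℝ)) x :=
      fun x hx => (hDeriv x hx).continuousAt.continuousWithinAt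
    have hmono : StrictMonoOn Ψ (Set.Ici gstar) := by
      apply strictMonoOn_of_deriv_pos (convex_Ici _)
      · intro x hx
        exact (hDeriv x (hgstar_pos.le.trans hx)).continuousAt.continuousWithinAt
      · intro x hx
        rw [interior_Ici] at hx
        rw [(hDeriv x (by linarith [hx.out] : (0:ℝ) ≤ x)).deriv]
        have := hPmono gstar x (by linarith) hx
        rwa [hPgstar] at this
    have hanti : StrictAntiOn Ψ (Set.Icc 0 gstar) := by
      apply strictAntiOn_of_deriv_neg (convex_Icc _ _)
      · intro x hx
        exact (hDeriv x hx.1).continuousAt.continuousWithinAt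
      · intro x hx
        rw [interior_Icc] at hx
        rw [(hDeriv x hx.1.le).deriv]
        have := hPmono x gstar (by linarith [hx.1]) hx.2
        rwa [hPgstar] at this
    intro g hg hne
    rcases lt_or_gt_of_ne hne with h | h
    · exact hanti ⟨hg, h.le⟩ ⟨hgstar_pos.le, le_refl _⟩ h
    · exact hmono (Set.mem_Ici.mpr (le_refl _)) (Set.mem_Ici.mpr h.le) h
end

section
/- With g* = σ² + ‖Ae‖² and u* = ±√(g*/‖Ae‖²) e, one has g(u*) = uᵀ*AᵀAu* = g* and h(u*)² = (eᵀAᵀAu*)² = g*‖Ae‖², hence L(u*) = Δ g* − E_t[φ_t(g*)] where Δ = c̃ − η̃‖Ae‖² and L, g, h, φ_t, c̃, η̃ are as in the reduced score-distillation loss. Consequently u* attains the global minimum of L. -/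
open Matrix MeasureTheory

private lemma intble_of_bound {f : ℝ → ℝ} (hf : Measurable f) {C : ℝ}
    (hC : ∀ t ∈ Set.Icc (0:ℝ) 1, |f t| ≤ C) : IntervalIntegrable f volume 0 1 := by
  rw [intervalIntegrable_iff_integrableOn_Ioc_of_le zero_le_one]
  apply MeasureTheory.Integrable.mono' (integrable_const C) hf.aestronglyMeasurable.restrict
  rw [ae_restrict_iff' measurableSet_Ioc]
  exact Filter.Eventually.of_forall fun t ht => hC t (Set.Ioc_subset_Icc_self ht)

set_option maxHeartbeats 1000000 in
/-- With `g* = σ² + ‖Ae‖²` and `u* = ±√(g*/‖Ae‖²) e`, one has `g(u*) = g*` and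
`h(u*)² = g*‖Ae‖²`, hence `L(u*) = Δ g* − E_t[φ_t(g*)]` with `Δ = c̃ − η̃‖Ae‖²`;
consequently `u*` attains the global minimum of `L`. -/
theorem stmt_14 {m d : ℕ} (A : Matrix (Fin m) (Fin d) ℝ) (e : Fin d → ℝ)
    (he : e ⬝ᵥ e = 1) (hAe : A.mulVec e ≠ 0)
    (σ σmin σmax : ℝ) (hσ : 0 < σ) (hσmin : 0 < σmin)
    (σt : ℝ → ℝ) (hmeas : Measurable σt)
    (hbound : ∀ t ∈ Set.Icc (0 : ℝ) 1, σmin ≤ σt t ∧ σt t ≤ σmax)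
    (g h : (Fin d → ℝ) → ℝ) (φ : ℝ → ℝ → ℝ) (ctil ηtil Δ : ℝ) (L : (Fin d → ℝ) → ℝ)
    (hg : g = fun u => u ⬝ᵥ (Aᵀ * A).mulVec u)
    (hh : h = fun u => e ⬝ᵥ (Aᵀ * A).mulVec u)
    (hφ : φ = fun t x => x / (σt t ^ 2 * (σt t ^ 2 + x)))
    (hctil : ctil = ∫ t in (0 : ℝ)..1, ((σt t ^ 2 + σ ^ 2) ^ 2)⁻¹)
    (hηtil : ηtil = ∫ t in (0 : ℝ)..1,
        (2 * (σt t ^ 2 + σ ^ 2) + (A.mulVec e) ⬝ᵥ (A.mulVec e)) /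
          ((σt t ^ 2 + σ ^ 2) ^ 2 *
            (σt t ^ 2 + σ ^ 2 + (A.mulVec e) ⬝ᵥ (A.mulVec e)) ^ 2))
    (hΔ : Δ = ctil - ηtil * ((A.mulVec e) ⬝ᵥ (A.mulVec e)))
    (hL : L = fun u => ctil * g u - ηtil * (h u) ^ 2 - ∫ t in (0 : ℝ)..1, φ t (g u))
    (gstar : ℝ) (hgstar : gstar = σ ^ 2 + (A.mulVec e) ⬝ᵥ (A.mulVec e))
    (ustar : Fin d → ℝ)
    (hustar : ustar = Real.sqrt (gstar / ((A.mulVec e) ⬝ᵥ (A.mulVec e))) • e ∨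
              ustar = -(Real.sqrt (gstar / ((A.mulVec e) ⬝ᵥ (A.mulVec e))) • e)) :
    g ustar = gstar ∧
      (h ustar) ^ 2 = gstar * ((A.mulVec e) ⬝ᵥ (A.mulVec e)) ∧
      L ustar = Δ * gstar - (∫ t in (0 : ℝ)..1, φ t gstar) ∧
      ∀ u : Fin d → ℝ, L ustar ≤ L u := by
  have quad : ∀ v w : Fin d → ℝ, v ⬝ᵥ (Aᵀ * A).mulVec w = (A.mulVec v) ⬝ᵥ (A.mulVec w) := by
    intro v w
    rw [← Matrix.mulVec_mulVec, Matrix.dotProduct_mulVec, Matrix.vecMul_transpose]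
  set k : ℝ := (A.mulVec e) ⬝ᵥ (A.mulVec e) with hkdef
  have hk : 0 < k := by
    rcases lt_or_eq_of_le (show (0:ℝ) ≤ k from Finset.sum_nonneg fun i _ => mul_self_nonneg _)
      with h1 | h1
    · exact h1
    · exact absurd (dotProduct_self_eq_zero.mp h1.symm) hAe
  have hgs : 0 < gstar := by rw [hgstar]; positivity
  set s : ℝ := Real.sqrt (gstar / k) with hsdef
  have hs2 : s ^ 2 = gstar / k := Real.sq_sqrt (by positivity)
  have hge : e ⬝ᵥ (Aᵀ * A).mulVec e = k := quad e e
  -- g at ± s • e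
  have hsmul : ∀ v : Fin d → ℝ, ∀ c : ℝ,
      (c • v) ⬝ᵥ (Aᵀ * A).mulVec (c • v) = c ^ 2 * (v ⬝ᵥ (Aᵀ * A).mulVec v) := by
    intro v c
    rw [Matrix.mulVec_smul, dotProduct_smul, smul_dotProduct]
    simp [smul_eq_mul]; ring
  have hgu : g ustar = gstar := by
    rcases hustar with h1 | h1 <;> rw [hg, h1] <;>
      simp only [neg_dotProduct, Matrix.mulVec_neg, dotProduct_neg, neg_neg] <;>
      rw [hsmul, hge, hs2] <;> field_simp
  have hhu : (h ustar) ^ 2 = gstar * k := by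
    have base : ∀ c : ℝ, e ⬝ᵥ (Aᵀ * A).mulVec (c • e) = c * k := by
      intro c
      rw [Matrix.mulVec_smul, dotProduct_smul, smul_eq_mul, hge]
    rcases hustar with h1 | h1 <;> simp only [hh, h1]
    · rw [base, mul_pow, hs2]; field_simp
    · rw [Matrix.mulVec_neg, dotProduct_neg, base, neg_pow, mul_pow, hs2]
      field_simp
  have hgnonneg : ∀ u : Fin d → ℝ, 0 ≤ g u := by
    intro u
    rw [hg]
    simp only []
    rw [quad]
    exact Finset.sum_nonneg fun i _ => mul_self_nonneg _
  have hCS : ∀ u : Fin d → ℝ, (h u) ^ 2 ≤ k * g u := by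
    intro u
    rw [hh, hg]
    simp only []
    rw [quad, quad]
    simpa [dotProduct, sq, hkdef] using
      Finset.sum_mul_sq_le_sq_mul_sq Finset.univ (A.mulVec e) (A.mulVec u)
  have hη : 0 ≤ ηtil := by
    rw [hηtil]
    apply intervalIntegral.integral_nonneg zero_le_one
    intro t _
    apply div_nonneg
    · nlinarith [sq_nonneg (σt t), sq_nonneg σ, hk.le]
    · positivity
  -- integrability facts
  have hσt_pos : ∀ t ∈ Set.Icc (0:ℝ) 1, σmin ^ 2 ≤ σt t ^ 2 := by
    intro t ht
    exact pow_le_pow_left₀ hσmin.le (hbound t ht).1 2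
  have hI1 : IntervalIntegrable (fun t => ((σt t ^ 2 + σ ^ 2) ^ 2)⁻¹) volume 0 1 := by
    apply intble_of_bound (by fun_prop) (C := ((σ ^ 2) ^ 2)⁻¹)
    intro t _
    rw [abs_of_nonneg (by positivity)]
    apply inv_anti₀ (by positivity)
    nlinarith [sq_nonneg (σt t)]
  have hI2 : IntervalIntegrable (fun t =>
      (2 * (σt t ^ 2 + σ ^ 2) + k) /
        ((σt t ^ 2 + σ ^ 2) ^ 2 * (σt t ^ 2 + σ ^ 2 + k) ^ 2)) volume 0 1 := by
    apply intble_of_bound (by fun_prop)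
      (C := (2 * (σmax ^ 2 + σ ^ 2) + k) / ((σ ^ 2) ^ 2 * k ^ 2))
    intro t ht
    have h1 : σt t ^ 2 ≤ σmax ^ 2 :=
      pow_le_pow_left₀ (hσmin.le.trans (hbound t ht).1) (hbound t ht).2 2
    have h0 : (0:ℝ) ≤ σt t ^ 2 := sq_nonneg _
    rw [abs_of_nonneg (by apply div_nonneg; nlinarith; positivity)]
    apply div_le_div₀ (by nlinarith) (by nlinarith) (by positivity)
    have h2 : (σ ^ 2) ^ 2 ≤ (σt t ^ 2 + σ ^ 2) ^ 2 :=
      pow_le_pow_left₀ (by positivity) (by nlinarith) 2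
    have h3 : k ^ 2 ≤ (σt t ^ 2 + σ ^ 2 + k) ^ 2 :=
      pow_le_pow_left₀ hk.le (by nlinarith) 2
    exact mul_le_mul h2 h3 (by positivity) (by positivity)
  have hIφ : ∀ x : ℝ, 0 ≤ x →
      IntervalIntegrable (fun t => x / (σt t ^ 2 * (σt t ^ 2 + x))) volume 0 1 := by
    intro x hx
    have hm : Measurable fun t => x / (σt t ^ 2 * (σt t ^ 2 + x)) :=
      (measurable_const.div (((hmeas.pow_const 2).mul ((hmeas.pow_const 2).add_const x))))
    apply intble_of_bound hm (C := x / (σmin ^ 2 * σmin ^ 2))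
    intro t ht
    have ha := hσt_pos t ht
    have ha0 : (0:ℝ) < σt t ^ 2 := lt_of_lt_of_le (by positivity) ha
    rw [abs_of_nonneg (div_nonneg hx (by nlinarith))]
    apply div_le_div₀ hx le_rfl (by positivity)
    nlinarith
  -- the key monotonicity fact
  have main : ∀ G : ℝ, 0 ≤ G →
      Δ * gstar - (∫ t in (0:ℝ)..1, φ t gstar) ≤ Δ * G - ∫ t in (0:ℝ)..1, φ t G := by
    intro G hG
    have h1 : (∫ t in (0:ℝ)..1, φ t G) - (∫ t in (0:ℝ)..1, φ t gstar) ≤ Δ * (G - gstar) := by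
      simp only [hφ]
      rw [← intervalIntegral.integral_sub (hIφ G hG) (hIφ gstar hgs.le)]
      have hΔeq : Δ * (G - gstar) = ∫ t in (0:ℝ)..1,
          (((σt t ^ 2 + σ ^ 2) ^ 2)⁻¹ -
            k * ((2 * (σt t ^ 2 + σ ^ 2) + k) /
              ((σt t ^ 2 + σ ^ 2) ^ 2 * (σt t ^ 2 + σ ^ 2 + k) ^ 2))) * (G - gstar) := by
        rw [intervalIntegral.integral_mul_const,
          intervalIntegral.integral_sub hI1 (hI2.const_mul k),
          intervalIntegral.integral_const_mul, hΔ, hctil, hηtil]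
        ring
      rw [hΔeq]
      apply intervalIntegral.integral_mono_on zero_le_one
        ((hIφ G hG).sub (hIφ gstar hgs.le))
        ((hI1.sub (hI2.const_mul k)).mul_const _)
      intro t ht
      have ha := hσt_pos t ht
      have ha0 : (0:ℝ) < σt t ^ 2 := lt_of_lt_of_le (by positivity) ha
      set a : ℝ := σt t ^ 2 with hadef
      have hc : (0:ℝ) < a + σ ^ 2 := by positivity
      have hck : (0:ℝ) < a + σ ^ 2 + k := by positivity
      have hF : ((a + σ ^ 2) ^ 2)⁻¹ -
          k * ((2 * (a + σ ^ 2) + k) / ((a + σ ^ 2) ^ 2 * (a + σ ^ 2 + k) ^ 2))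
          = ((a + gstar) ^ 2)⁻¹ := by
        rw [hgstar]
        have h1 : a + (σ ^ 2 + k) = (a + σ ^ 2) + k := by ring
        rw [h1]
        field_simp
        ring
      rw [hF]
      have hag : (0:ℝ) < a + G := by linarith
      have hags : (0:ℝ) < a + gstar := by linarith
      have hkey : ((a + gstar) ^ 2)⁻¹ * (G - gstar) -
          (G / (a * (a + G)) - gstar / (a * (a + gstar)))
          = (G - gstar) ^ 2 / ((a + gstar) ^ 2 * (a + G)) := by
        field_simp
        ring
      nlinarith [div_nonneg (sq_nonneg (G - gstar))
        (le_of_lt (show (0:ℝ) < (a + gstar) ^ 2 * (a + G) by positivity))]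
    linarith
  refine ⟨hgu, hhu, ?_, ?_⟩
  · rw [hL]
    simp only [hgu, hhu, hΔ]
    ring
  · intro u
    have h1 := main (g u) (hgnonneg u)
    have h2 : ηtil * (h u) ^ 2 ≤ ηtil * (k * g u) :=
      mul_le_mul_of_nonneg_left (hCS u) hη
    have hLu : L ustar = Δ * gstar - (∫ t in (0:ℝ)..1, φ t gstar) := by
      rw [hL]; simp only [hgu, hhu, hΔ]; ring
    rw [hLu, hL]
    simp only [hΔ] at h1 ⊢
    nlinarith [h1, h2]
end
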